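/- For r ≥ 3, the space W_{N,r} decomposes as: every element of W_{N,r} is a ℚ-linear combination of polynomials of the form p(x1,x2) x3^{n3-1} ⋯ xr^{nr-1} where p ∈ W_{n,2} for some 1 < n < N and (n3,...,nr) ∈ S_{N-n,r-2}; consequently dim W_{N,r} = Σ_{1<n<N} dim W_{n,2} * |S_{N-n,r-2}|. -/

import Mathlib

open MvPolynomial Finset

attribute [local instance] Classical.propDecidable

noncomputable section

/-- The first substitution in `σ^{(i)}`: `p ↦ p(x_{i+1}-x_i, x1,...,x̂_{i+1},...,xr)`,
in 1-indexed variables. -/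
def sub1 (i : ℕ) : ℕ → MvPolynomial ℕ ℚ := fun k =>
  if k = 1 then X (i + 1) - X i else if k ≤ i + 1 then X (k - 1) else X k

/-- The second substitution in `σ^{(i)}`: `p ↦ p(x_{i+1}-x_i, x1,...,x̂_i,...,xr)`. -/
def sub2 (i : ℕ) : ℕ → MvPolynomial ℕ ℚ := fun k =>
  if k = 1 then X (i + 1) - X i else if k ≤ i then X (k - 1) else X k

/-- The operator `σ^{(i)}`:
`(p|σ^{(i)})(x1,...,xr) = p(x_{i+1}-x_i, x1,...,x̂_{i+1},...,xr) - p(x_{i+1}-x_i, x1,...,x̂_i,...,xr)`. -/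
def sigmaOp (i : ℕ) (p : MvPolynomial ℕ ℚ) : MvPolynomial ℕ ℚ :=
  aeval (sub1 i) p - aeval (sub2 i) p

/-- `S_{N,r}`: the set of `r`-tuples of odd integers `≥ 3` summing to `N`. -/
def Sset (N r : ℕ) : Finset (Fin r → ℕ) :=
  (Fintype.piFinset fun _ => Finset.Icc 3 N).filter fun m =>
    (∑ i, m i) = N ∧ ∀ i, Odd (m i)

/-- Extend an `r`-tuple to a 1-indexed function `ℕ → ℕ` (zero outside `[1, r]`). -/
def extFun (r : ℕ) (m : Fin r → ℕ) : ℕ → ℕ := fun k =>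
  if h : 1 ≤ k ∧ k ≤ r then m ⟨k - 1, by omega⟩ else 0

/-- The exponent vector of the monomial `x1^{n1-1} ⋯ xr^{nr-1}` (1-indexed variables). -/
def expvec (r : ℕ) (n : Fin r → ℕ) : ℕ →₀ ℕ :=
  ∑ i : Fin r, Finsupp.single ((i : ℕ) + 1) (n i - 1)

/-- `σ^{(i)}` as a linear map. -/
def sigmaLin (i : ℕ) : MvPolynomial ℕ ℚ →ₗ[ℚ] MvPolynomial ℕ ℚ :=
  (aeval (sub1 i)).toLinearMap - (aeval (sub2 i)).toLinearMap

/-- The linear projection onto the span of the monomials `x1^{n1-1} ⋯ xr^{nr-1}` with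
`(n1,...,nr) ∈ S_{N,r}`. -/
def truncMap (N r : ℕ) : MvPolynomial ℕ ℚ →ₗ[ℚ] MvPolynomial ℕ ℚ :=
  ∑ n ∈ Sset N r, (MvPolynomial.monomial (expvec r n)).comp (MvPolynomial.lcoeff ℚ (expvec r n))

/-- The space `W_{N,r}` of homogeneous polynomials supported on totally odd monomials
`x1^{n1-1} ⋯ xr^{nr-1}`, `(n1,...,nr) ∈ S_{N,r}`, satisfying
`p(x1,...,xr) = p(x2-x1,x2,x3,...,xr) - p(x2-x1,x1,x3,...,xr)`. -/
def Wspace (N r : ℕ) : Submodule ℚ (MvPolynomial ℕ ℚ) :=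
  LinearMap.ker (LinearMap.id + sigmaLin 1) ⊓ LinearMap.ker (LinearMap.id - truncMap N r)

/-! ### Basic lemmas -/

lemma sum_single_apply {r c : ℕ} (f : Fin r → ℕ) (j : ℕ) :
    (∑ i : Fin r, Finsupp.single ((i : ℕ) + c) (f i)) j
      = if h : c ≤ j ∧ j < r + c then f ⟨j - c, by omega⟩ else 0 := by
  rw [Finsupp.finset_sum_apply]
  split_ifs with h
  · rw [Finset.sum_eq_single (⟨j - c, by omega⟩ : Fin r)]
    · simp [Finsupp.single_apply]; omega
    · intro i _ hi
      rw [Finsupp.single_apply, if_neg]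
      intro he
      exact hi (by apply Fin.ext; simp; omega)
    · simp
  · apply Finset.sum_eq_zero
    intro i _
    rw [Finsupp.single_apply, if_neg]
    have := i.2
    omega

lemma expvec_apply (r : ℕ) (m : Fin r → ℕ) (j : ℕ) :
    expvec r m j = if h : 1 ≤ j ∧ j < r + 1 then m ⟨j - 1, by omega⟩ - 1 else 0 :=
  sum_single_apply (c := 1) (fun i => m i - 1) j

/-- Tail exponent vector for the monomial `x3^{t1-1} ⋯`. -/
def tvec (k : ℕ) (t : Fin (k + 1) → ℕ) : ℕ →₀ ℕ :=
  ∑ i : Fin (k + 1), Finsupp.single ((i : ℕ) + 3) (t i - 1)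

lemma tvec_apply (k : ℕ) (t : Fin (k + 1) → ℕ) (j : ℕ) :
    tvec k t j = if h : 3 ≤ j ∧ j < (k + 1) + 3 then t ⟨j - 3, by omega⟩ - 1 else 0 :=
  sum_single_apply (c := 3) (fun i => t i - 1) j

lemma mem_Sset {N r : ℕ} {m : Fin r → ℕ} :
    m ∈ Sset N r ↔ (∀ i, 3 ≤ m i) ∧ (∑ i, m i) = N ∧ ∀ i, Odd (m i) := by
  unfold Sset
  simp only [Finset.mem_filter, Fintype.mem_piFinset, Finset.mem_Icc]
  constructor
  · rintro ⟨h1, h2, h3⟩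
    exact ⟨fun i => (h1 i).1, h2, h3⟩
  · rintro ⟨h1, h2, h3⟩
    refine ⟨fun i => ⟨h1 i, ?_⟩, h2, h3⟩
    rw [← h2]
    exact Finset.single_le_sum (fun i _ => Nat.zero_le _) (Finset.mem_univ i)

lemma expvec_inj {r : ℕ} {m m' : Fin r → ℕ} (h : ∀ i, 1 ≤ m i) (h' : ∀ i, 1 ≤ m' i)
    (e : expvec r m = expvec r m') : m = m' := by
  funext i
  have hv := DFunLike.congr_fun e ((i : ℕ) + 1)
  have hi := i.2
  rw [expvec_apply, expvec_apply] at hv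
  split_ifs at hv with hc
  · have h2 : ∀ hh : (i : ℕ) + 1 - 1 < r, (⟨(i : ℕ) + 1 - 1, hh⟩ : Fin r) = i := by
      intro hh; apply Fin.ext; simp
    simp only [h2] at hv
    have h3 := h i; have h4 := h' i
    omega
  · exact absurd ⟨by omega, by omega⟩ hc

lemma tvec_inj {k : ℕ} {t t' : Fin (k + 1) → ℕ} (h : ∀ i, 1 ≤ t i) (h' : ∀ i, 1 ≤ t' i)
    (e : tvec k t = tvec k t') : t = t' := by
  funext i
  have hv := DFunLike.congr_fun e ((i : ℕ) + 3)
  have hi := i.2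
  rw [tvec_apply, tvec_apply] at hv
  split_ifs at hv with hc
  · have h2 : ∀ hh : (i : ℕ) + 3 - 3 < k + 1, (⟨(i : ℕ) + 3 - 3, hh⟩ : Fin (k + 1)) = i := by
      intro hh; apply Fin.ext; simp
    simp only [h2] at hv
    have h3 := h i; have h4 := h' i
    omega
  · exact absurd ⟨by omega, by omega⟩ hc

lemma truncMap_apply (N r : ℕ) (p : MvPolynomial ℕ ℚ) :
    truncMap N r p = ∑ m ∈ Sset N r, monomial (expvec r m) (coeff (expvec r m) p) := by
  simp [truncMap, LinearMap.sum_apply, lcoeff]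

lemma truncMap_monomial {N r : ℕ} {m : Fin r → ℕ} (hm : m ∈ Sset N r) (c : ℚ) :
    truncMap N r (monomial (expvec r m) c) = monomial (expvec r m) c := by
  rw [truncMap_apply]
  rw [Finset.sum_eq_single_of_mem m hm]
  · rw [coeff_monomial, if_pos rfl]
  · intro m' hm' hne
    rw [coeff_monomial, if_neg, map_zero]
    intro he
    exact hne (expvec_inj (fun i => by have := (mem_Sset.1 hm).1 i; omega)
      (fun i => by have := (mem_Sset.1 hm').1 i; omega) he).symm

lemma mem_Wspace {N r : ℕ} {p : MvPolynomial ℕ ℚ} :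
    p ∈ Wspace N r ↔ p + sigmaLin 1 p = 0 ∧ truncMap N r p = p := by
  simp only [Wspace, Submodule.mem_inf, LinearMap.mem_ker, LinearMap.add_apply,
    LinearMap.sub_apply, LinearMap.id_apply, sub_eq_zero]
  tauto

/-! ### Supported-variables lemmas -/

lemma monomial_mem_supported {d : ℕ →₀ ℕ} (h : ↑d.support ⊆ ({1, 2} : Set ℕ)) (c : ℚ) :
    monomial d c ∈ supported ℚ ({1, 2} : Set ℕ) := by
  rcases eq_or_ne c 0 with rfl | hc
  · simp only [map_zero]
    exact Subalgebra.zero_mem _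
  · rw [mem_supported, vars_monomial hc]
    exact h

lemma coeff_supported_eq_zero {q : MvPolynomial ℕ ℚ} (h : q ∈ supported ℚ ({1, 2} : Set ℕ))
    {d : ℕ →₀ ℕ} (hd : ¬ ↑d.support ⊆ ({1, 2} : Set ℕ)) : coeff d q = 0 := by
  by_contra hne
  rw [Set.not_subset] at hd
  obtain ⟨k, hk1, hk2⟩ := hd
  refine hk2 ((mem_supported.1 h) ?_)
  rw [Finset.mem_coe, mem_vars]
  exact ⟨d, mem_support_iff.2 hne, hk1⟩

lemma aeval_supported {f : ℕ → MvPolynomial ℕ ℚ}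
    (hf : ∀ i ∈ ({1, 2} : Set ℕ), f i ∈ supported ℚ ({1, 2} : Set ℕ))
    {q : MvPolynomial ℕ ℚ} (h : q ∈ supported ℚ ({1, 2} : Set ℕ)) :
    aeval f q ∈ supported ℚ ({1, 2} : Set ℕ) := by
  rw [supported_eq_adjoin_X] at h
  have h2 : aeval f q ∈ Algebra.adjoin ℚ (⇑(aeval (R := ℚ) (S₁ := MvPolynomial ℕ ℚ) f) '' (X '' ({1, 2} : Set ℕ))) := by
    rw [← AlgHom.map_adjoin]
    exact Subalgebra.mem_map.2 ⟨q, h, rfl⟩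
  exact Algebra.adjoin_le (by rintro _ ⟨_, ⟨i, hi, rfl⟩, rfl⟩; simpa using hf i hi) h2

lemma sub1_supported : ∀ i ∈ ({1, 2} : Set ℕ), sub1 1 i ∈ supported ℚ ({1, 2} : Set ℕ) := by
  rintro i (rfl | rfl)
  · show X 2 - X 1 ∈ _
    exact Subalgebra.sub_mem _ (X_mem_supported.2 (by simp)) (X_mem_supported.2 (by simp))
  · show (if (2:ℕ) = 1 then _ else if (2:ℕ) ≤ 2 then X (2-1) else X 2) ∈ _
    rw [if_neg (by omega), if_pos (by omega)]
    exact X_mem_supported.2 (by simp)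

lemma sub2_supported : ∀ i ∈ ({1, 2} : Set ℕ), sub2 1 i ∈ supported ℚ ({1, 2} : Set ℕ) := by
  rintro i (rfl | rfl)
  · show X 2 - X 1 ∈ _
    exact Subalgebra.sub_mem _ (X_mem_supported.2 (by simp)) (X_mem_supported.2 (by simp))
  · show (if (2:ℕ) = 1 then _ else if (2:ℕ) ≤ 1 then X (2-1) else X 2) ∈ _
    rw [if_neg (by omega), if_neg (by omega)]
    exact X_mem_supported.2 (by simp)

lemma sigmaLin_supported {q : MvPolynomial ℕ ℚ} (h : q ∈ supported ℚ ({1, 2} : Set ℕ)) :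
    sigmaLin 1 q ∈ supported ℚ ({1, 2} : Set ℕ) := by
  have h1 := aeval_supported sub1_supported h
  have h2 := aeval_supported sub2_supported h
  exact Subalgebra.sub_mem _ h1 h2
/-! ### Splitting tuples -/

def hd2 (k : ℕ) (m : Fin (k + 3) → ℕ) : Fin 2 → ℕ := ![m 0, m 1]

def tl2 (k : ℕ) (m : Fin (k + 3) → ℕ) : Fin (k + 1) → ℕ := fun i => m i.succ.succ

def cmb (k : ℕ) (a : Fin 2 → ℕ) (t : Fin (k + 1) → ℕ) : Fin (k + 3) → ℕ :=
  Fin.cons (a 0) (Fin.cons (a 1) t)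

lemma sum_fin_split {M : Type*} [AddCommMonoid M] {k : ℕ} (f : Fin (k + 3) → M) :
    ∑ i, f i = f 0 + f 1 + ∑ i : Fin (k + 1), f i.succ.succ := by
  rw [Fin.sum_univ_succ, Fin.sum_univ_succ, Fin.succ_zero_eq_one]
  exact (add_assoc _ _ _).symm

lemma cmb_zero (k : ℕ) (a : Fin 2 → ℕ) (t : Fin (k + 1) → ℕ) : cmb k a t 0 = a 0 := rfl

lemma cmb_one (k : ℕ) (a : Fin 2 → ℕ) (t : Fin (k + 1) → ℕ) : cmb k a t 1 = a 1 := by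
  have h : (1 : Fin (k + 3)) = (0 : Fin (k + 2)).succ := by
    apply Fin.ext; simp [Fin.val_one]
  rw [cmb, h, Fin.cons_succ, Fin.cons_zero]

lemma cmb_succ_succ (k : ℕ) (a : Fin 2 → ℕ) (t : Fin (k + 1) → ℕ) (i : Fin (k + 1)) :
    cmb k a t i.succ.succ = t i := by
  rw [cmb, Fin.cons_succ, Fin.cons_succ]

lemma hd2_cmb (k : ℕ) (a : Fin 2 → ℕ) (t : Fin (k + 1) → ℕ) : hd2 k (cmb k a t) = a := by
  funext i
  fin_cases i
  · simp [hd2, cmb_zero]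
  · simp [hd2, cmb_one]

lemma tl2_cmb (k : ℕ) (a : Fin 2 → ℕ) (t : Fin (k + 1) → ℕ) : tl2 k (cmb k a t) = t := by
  funext i
  rw [tl2, cmb_succ_succ]

lemma cmb_hd_tl (k : ℕ) (m : Fin (k + 3) → ℕ) : cmb k (hd2 k m) (tl2 k m) = m := by
  funext i
  refine Fin.cases ?_ (fun j => ?_) i
  · rfl
  · refine Fin.cases ?_ (fun l => ?_) j
    · rw [show (0 : Fin (k + 2)).succ = (1 : Fin (k + 3)) from by apply Fin.ext; simp [Fin.val_one]]
      rw [cmb_one]; rfl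
    · rw [cmb_succ_succ]; rfl

lemma sum_cmb (k : ℕ) (a : Fin 2 → ℕ) (t : Fin (k + 1) → ℕ) :
    ∑ i, cmb k a t i = a 0 + a 1 + ∑ i, t i := by
  rw [sum_fin_split]
  simp only [cmb_zero, cmb_one, cmb_succ_succ]

lemma expvec_two (a : Fin 2 → ℕ) :
    expvec 2 a = Finsupp.single 1 (a 0 - 1) + Finsupp.single 2 (a 1 - 1) := by
  rw [expvec, Fin.sum_univ_two]
  norm_num

lemma expvec_cmb (k : ℕ) (a : Fin 2 → ℕ) (t : Fin (k + 1) → ℕ) :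
    expvec (k + 3) (cmb k a t) = expvec 2 a + tvec k t := by
  rw [expvec, sum_fin_split, expvec_two, tvec]
  simp only [cmb_zero, cmb_one, cmb_succ_succ, Fin.val_zero, Fin.val_one, Fin.val_succ]
  try norm_num [add_assoc]

lemma cmb_mem_Sset {N n k : ℕ} {a : Fin 2 → ℕ} {t : Fin (k + 1) → ℕ}
    (h2 : n < N) (ha : a ∈ Sset n 2) (ht : t ∈ Sset (N - n) (k + 1)) :
    cmb k a t ∈ Sset N (k + 3) := by
  obtain ⟨ha1, ha2, ha3⟩ := mem_Sset.1 ha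
  obtain ⟨ht1, ht2, ht3⟩ := mem_Sset.1 ht
  rw [Fin.sum_univ_two] at ha2
  have hval : ∀ i, cmb k a t i = a 0 ∨ cmb k a t i = a 1 ∨ ∃ j, cmb k a t i = t j := by
    intro i
    refine Fin.cases ?_ (fun j => ?_) i
    · exact Or.inl rfl
    · refine Fin.cases ?_ (fun l => ?_) j
      · rw [show (0 : Fin (k + 2)).succ = (1 : Fin (k + 3)) from by apply Fin.ext; simp [Fin.val_one]]
        rw [cmb_one]; exact Or.inr (Or.inl rfl)
      · rw [cmb_succ_succ]; exact Or.inr (Or.inr ⟨l, rfl⟩)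
  rw [mem_Sset]
  refine ⟨?_, ?_, ?_⟩
  · intro i
    rcases hval i with h | h | ⟨j, h⟩ <;> rw [h]
    · exact ha1 0
    · exact ha1 1
    · exact ht1 j
  · rw [sum_cmb, ha2, ht2]; omega
  · intro i
    rcases hval i with h | h | ⟨j, h⟩ <;> rw [h]
    · exact ha3 0
    · exact ha3 1
    · exact ht3 j

lemma Sset_head_tail {N k : ℕ} {m : Fin (k + 3) → ℕ} (hm : m ∈ Sset N (k + 3)) :
    1 < m 0 + m 1 ∧ m 0 + m 1 < N ∧ hd2 k m ∈ Sset (m 0 + m 1) 2 ∧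
      tl2 k m ∈ Sset (N - (m 0 + m 1)) (k + 1) := by
  obtain ⟨h1, h2, h3⟩ := mem_Sset.1 hm
  rw [sum_fin_split] at h2
  have htl : ∀ i : Fin (k + 1), 3 ≤ tl2 k m i := fun i => h1 _
  have hsum : 3 * (k + 1) ≤ ∑ i, tl2 k m i := by
    calc 3 * (k + 1) = (Finset.univ : Finset (Fin (k + 1))).card * 3 := by
          simp [Finset.card_univ, mul_comm]
      _ ≤ ∑ i, tl2 k m i := Finset.card_nsmul_le_sum _ _ _ (fun i _ => htl i)
  have h10 := h1 0
  have h11 := h1 1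
  have hst : ∑ i : Fin (k + 1), m i.succ.succ = ∑ i, tl2 k m i := rfl
  refine ⟨by omega, by omega, ?_, ?_⟩
  · rw [mem_Sset]
    refine ⟨?_, ?_, ?_⟩
    · intro i; fin_cases i
      · exact h1 0
      · exact h1 1
    · rw [Fin.sum_univ_two]; rfl
    · intro i; fin_cases i
      · exact h3 0
      · exact h3 1
  · rw [mem_Sset]
    exact ⟨htl, by omega, fun i => h3 _⟩

lemma prod_X_pow_eq (k : ℕ) (t : Fin (k + 1) → ℕ) :
    (∏ i : Fin (k + 1), (X ((i : ℕ) + 3) : MvPolynomial ℕ ℚ) ^ (t i - 1)) =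
      monomial (tvec k t) 1 := by
  rw [tvec, monomial_sum_one]
  exact Finset.prod_congr rfl fun i _ => X_pow_eq_monomial
/-! ### The extraction operator and the index set -/

def Phi (n : ℕ) (v : ℕ →₀ ℕ) : MvPolynomial ℕ ℚ →ₗ[ℚ] MvPolynomial ℕ ℚ :=
  ∑ m ∈ Sset n 2, (MvPolynomial.monomial (expvec 2 m)).comp
    (MvPolynomial.lcoeff ℚ (expvec 2 m + v))

lemma Phi_apply (n : ℕ) (v : ℕ →₀ ℕ) (p : MvPolynomial ℕ ℚ) :
    Phi n v p = ∑ m ∈ Sset n 2, monomial (expvec 2 m) (coeff (expvec 2 m + v) p) := by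
  simp [Phi, LinearMap.sum_apply, lcoeff]

lemma expvec_two_support (a : Fin 2 → ℕ) :
    ↑(expvec 2 a).support ⊆ ({1, 2} : Set ℕ) := by
  intro j hj
  rw [Finset.mem_coe, Finsupp.mem_support_iff] at hj
  rw [expvec_apply] at hj
  by_contra hc
  simp only [Set.mem_insert_iff, Set.mem_singleton_iff] at hc
  rw [dif_neg (by omega)] at hj
  exact hj rfl

lemma Phi_supported (n : ℕ) (v : ℕ →₀ ℕ) (p : MvPolynomial ℕ ℚ) :
    Phi n v p ∈ supported ℚ ({1, 2} : Set ℕ) := by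
  rw [Phi_apply]
  exact Subalgebra.sum_mem _ fun m _ => monomial_mem_supported (expvec_two_support m) _

lemma Wspace_two_supported {n : ℕ} {q : MvPolynomial ℕ ℚ} (hq : q ∈ Wspace n 2) :
    q ∈ supported ℚ ({1, 2} : Set ℕ) := by
  rw [← (mem_Wspace.1 hq).2, truncMap_apply]
  refine Subalgebra.sum_mem _ fun m _ => monomial_mem_supported ?_ _
  exact expvec_two_support m

def Ifin (N k : ℕ) : Finset ((_ : ℕ) × (Fin (k + 1) → ℕ)) :=
  (Finset.Ioo 1 N).sigma fun n => Sset (N - n) (k + 1)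

lemma mem_Ifin {N k : ℕ} {x : (_ : ℕ) × (Fin (k + 1) → ℕ)} :
    x ∈ Ifin N k ↔ x.1 ∈ Finset.Ioo 1 N ∧ x.2 ∈ Sset (N - x.1) (k + 1) :=
  Finset.mem_sigma

lemma tvec_eq_of_Ifin {N k : ℕ} {x x' : (_ : ℕ) × (Fin (k + 1) → ℕ)}
    (hx : x ∈ Ifin N k) (hx' : x' ∈ Ifin N k) (h : tvec k x.2 = tvec k x'.2) : x = x' := by
  obtain ⟨hx1, hx2⟩ := mem_Ifin.1 hx
  obtain ⟨hx1', hx2'⟩ := mem_Ifin.1 hx'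
  obtain ⟨ha1, ha2, -⟩ := mem_Sset.1 hx2
  obtain ⟨ha1', ha2', -⟩ := mem_Sset.1 hx2'
  have h2 : x.2 = x'.2 :=
    tvec_inj (fun i => by have := ha1 i; omega) (fun i => by have := ha1' i; omega) h
  have h1 : x.1 = x'.1 := by
    rw [Finset.mem_Ioo] at hx1 hx1'
    rw [h2, ha2'] at ha2
    omega
  exact Sigma.ext h1 (heq_of_eq h2)

lemma coeff_key {N k : ℕ} {x x' : (_ : ℕ) × (Fin (k + 1) → ℕ)}
    (hx : x ∈ Ifin N k) (hx' : x' ∈ Ifin N k)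
    {q : MvPolynomial ℕ ℚ} (hq : q ∈ supported ℚ ({1, 2} : Set ℕ))
    {d : ℕ →₀ ℕ} (hd : ↑d.support ⊆ ({1, 2} : Set ℕ)) :
    coeff (d + tvec k x.2) (q * monomial (tvec k x'.2) 1) =
      if x' = x then coeff d q else 0 := by
  split_ifs with he
  · subst he
    rw [coeff_mul_monomial, mul_one]
  · rw [coeff_mul_monomial']
    split_ifs with hle
    · rcases eq_or_ne (coeff (d + tvec k x.2 - tvec k x'.2) q) 0 with h0 | h0
      · rw [h0, zero_mul]
      · exfalso
        have hes : ↑(d + tvec k x.2 - tvec k x'.2).support ⊆ ({1, 2} : Set ℕ) := by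
          by_contra hns
          exact h0 (coeff_supported_eq_zero hq hns)
        have htv : tvec k x.2 = tvec k x'.2 := by
          ext j
          rcases lt_or_ge j 3 with hj | hj
          · rw [tvec_apply, tvec_apply, dif_neg (by omega), dif_neg (by omega)]
          · have hdj : d j = 0 := by
              by_contra hdj
              have h5 := hd (Finset.mem_coe.2 (Finsupp.mem_support_iff.2 hdj))
              simp only [Set.mem_insert_iff, Set.mem_singleton_iff] at h5
              omega
            have hej : (d + tvec k x.2 - tvec k x'.2) j = 0 := by
              by_contra hej
              have h5 := hes (Finset.mem_coe.2 (Finsupp.mem_support_iff.2 hej))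
              simp only [Set.mem_insert_iff, Set.mem_singleton_iff] at h5
              omega
            have hle' : tvec k x'.2 j ≤ (d + tvec k x.2) j := Finsupp.le_def.1 hle j
            have heval : (d + tvec k x.2 - tvec k x'.2) j
                = (d + tvec k x.2) j - tvec k x'.2 j := Finsupp.tsub_apply _ _ j
            rw [Finsupp.add_apply] at hle' heval
            omega
        exact he (tvec_eq_of_Ifin hx' hx htv.symm)
    · rfl
/-! ### σ commutes with multiplication by tail monomials -/

lemma sigmaLin_apply' (p : MvPolynomial ℕ ℚ) :
    sigmaLin 1 p = aeval (sub1 1) p - aeval (sub2 1) p := rfl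

lemma aeval_fix_monomial {f : ℕ → MvPolynomial ℕ ℚ} (hf : ∀ j, 3 ≤ j → f j = X j)
    (k : ℕ) (t : Fin (k + 1) → ℕ) :
    aeval f (monomial (tvec k t) (1 : ℚ)) = monomial (tvec k t) 1 := by
  rw [← prod_X_pow_eq, map_prod]
  refine Finset.prod_congr rfl fun i _ => ?_
  rw [map_pow, aeval_X, hf _ (by omega)]

lemma sub1_fix : ∀ j, 3 ≤ j → sub1 1 j = X j := by
  intro j hj
  rw [sub1, if_neg (by omega), if_neg (by omega)]

lemma sub2_fix : ∀ j, 3 ≤ j → sub2 1 j = X j := by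
  intro j hj
  rw [sub2, if_neg (by omega), if_neg (by omega)]

lemma sigmaLin_mul_tvec (q : MvPolynomial ℕ ℚ) (k : ℕ) (t : Fin (k + 1) → ℕ) :
    sigmaLin 1 (q * monomial (tvec k t) 1) = sigmaLin 1 q * monomial (tvec k t) 1 := by
  rw [sigmaLin_apply', sigmaLin_apply', map_mul, map_mul,
    aeval_fix_monomial sub1_fix, aeval_fix_monomial sub2_fix, sub_mul]

/-! ### The decomposition -/

lemma decomp {N k : ℕ} {p : MvPolynomial ℕ ℚ} (hp : truncMap N (k + 3) p = p) :
    p = ∑ x ∈ Ifin N k, Phi x.1 (tvec k x.2) p * monomial (tvec k x.2) 1 := by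
  have hR : ∑ x ∈ Ifin N k, Phi x.1 (tvec k x.2) p * monomial (tvec k x.2) 1
      = ∑ x ∈ Ifin N k, ∑ m ∈ Sset x.1 2,
          monomial (expvec 2 m + tvec k x.2) (coeff (expvec 2 m + tvec k x.2) p) := by
    refine Finset.sum_congr rfl fun x _ => ?_
    rw [Phi_apply, Finset.sum_mul]
    refine Finset.sum_congr rfl fun m _ => ?_
    rw [monomial_mul, mul_one]
  rw [hR, Finset.sum_sigma']
  conv_lhs => rw [← hp, truncMap_apply]
  refine Finset.sum_nbij'
    (i := fun m => (⟨⟨m 0 + m 1, tl2 k m⟩, hd2 k m⟩ :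
      (_ : (_ : ℕ) × (Fin (k + 1) → ℕ)) × (Fin 2 → ℕ)))
    (j := fun y => cmb k y.2 y.1.2) ?_ ?_ ?_ ?_ ?_
  · intro m hm
    obtain ⟨h1, h2, h3, h4⟩ := Sset_head_tail hm
    rw [Finset.mem_sigma, mem_Ifin]
    exact ⟨⟨Finset.mem_Ioo.2 ⟨h1, h2⟩, h4⟩, h3⟩
  · intro y hy
    rw [Finset.mem_sigma, mem_Ifin] at hy
    obtain ⟨⟨h1, h2⟩, h3⟩ := hy
    exact cmb_mem_Sset (Finset.mem_Ioo.1 h1).2 h3 h2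
  · intro m _
    exact cmb_hd_tl k m
  · intro y hy
    rw [Finset.mem_sigma, mem_Ifin] at hy
    obtain ⟨⟨h1, h2⟩, h3⟩ := hy
    obtain ⟨⟨n, t⟩, a⟩ := y
    have hn : a 0 + a 1 = n := by
      have := (mem_Sset.1 h3).2.1
      rw [Fin.sum_univ_two] at this
      exact this
    simp only [cmb_zero, cmb_one, tl2_cmb, hd2_cmb]
    rw [hn]
  · intro m _
    rw [← expvec_cmb, cmb_hd_tl]

lemma indep {N k : ℕ} (q : ((_ : ℕ) × (Fin (k + 1) → ℕ)) → MvPolynomial ℕ ℚ)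
    (hq : ∀ x ∈ Ifin N k, q x ∈ supported ℚ ({1, 2} : Set ℕ))
    (h : ∑ x ∈ Ifin N k, q x * monomial (tvec k x.2) 1 = 0) :
    ∀ x ∈ Ifin N k, q x = 0 := by
  intro x hx
  refine MvPolynomial.ext _ _ fun d => ?_
  rw [coeff_zero]
  by_cases hd : ↑d.support ⊆ ({1, 2} : Set ℕ)
  · have h0 := congrArg (coeff (d + tvec k x.2)) h
    rw [coeff_zero, coeff_sum] at h0
    rw [Finset.sum_congr rfl
      (fun x' hx' => coeff_key hx hx' (hq x' hx') hd)] at h0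
    rw [Finset.sum_ite_eq' (Ifin N k) x, if_pos hx] at h0
    exact h0
  · exact coeff_supported_eq_zero (hq x hx) hd

lemma trunc_mul_tvec {N k : ℕ} {x : (_ : ℕ) × (Fin (k + 1) → ℕ)} (hx : x ∈ Ifin N k)
    {q : MvPolynomial ℕ ℚ} (hq : q ∈ Wspace x.1 2) :
    truncMap N (k + 3) (q * monomial (tvec k x.2) 1) = q * monomial (tvec k x.2) 1 := by
  obtain ⟨hx1, hx2⟩ := mem_Ifin.1 hx
  rw [Finset.mem_Ioo] at hx1
  have hq2 : q = ∑ m ∈ Sset x.1 2, monomial (expvec 2 m) (coeff (expvec 2 m) q) := by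
    conv_lhs => rw [← (mem_Wspace.1 hq).2, truncMap_apply]
  rw [hq2, Finset.sum_mul, map_sum]
  refine Finset.sum_congr rfl fun m hm => ?_
  rw [monomial_mul, mul_one, ← expvec_cmb]
  exact truncMap_monomial (cmb_mem_Sset hx1.2 hm hx2) _

lemma Phi_mem_Wspace {N k : ℕ} {p : MvPolynomial ℕ ℚ} (hp : p ∈ Wspace N (k + 3)) :
    ∀ x ∈ Ifin N k, Phi x.1 (tvec k x.2) p ∈ Wspace x.1 2 := by
  have hdec := decomp (mem_Wspace.1 hp).2
  have hsig := indep
      (fun x => Phi x.1 (tvec k x.2) p + sigmaLin 1 (Phi x.1 (tvec k x.2) p))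
      (fun x _ => Subalgebra.add_mem _ (Phi_supported _ _ _)
        (sigmaLin_supported (Phi_supported _ _ _)))
      (by
        have h0 := (mem_Wspace.1 hp).1
        calc ∑ x ∈ Ifin N k,
              (Phi x.1 (tvec k x.2) p + sigmaLin 1 (Phi x.1 (tvec k x.2) p))
                * monomial (tvec k x.2) 1
            = ∑ x ∈ Ifin N k, (Phi x.1 (tvec k x.2) p * monomial (tvec k x.2) 1
                + sigmaLin 1 (Phi x.1 (tvec k x.2) p * monomial (tvec k x.2) 1)) := by
              refine Finset.sum_congr rfl fun x _ => ?_
              rw [add_mul, sigmaLin_mul_tvec]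
          _ = (∑ x ∈ Ifin N k, Phi x.1 (tvec k x.2) p * monomial (tvec k x.2) 1)
                + sigmaLin 1 (∑ x ∈ Ifin N k, Phi x.1 (tvec k x.2) p * monomial (tvec k x.2) 1) := by
              rw [Finset.sum_add_distrib, map_sum]
          _ = p + sigmaLin 1 p := by rw [← hdec]
          _ = 0 := h0)
  intro x hx
  rw [mem_Wspace]
  refine ⟨hsig x hx, ?_⟩
  rw [Phi_apply, map_sum]
  exact Finset.sum_congr rfl fun m hm => truncMap_monomial hm _

lemma sum_mem_Wspace {N k : ℕ} (q : ((_ : ℕ) × (Fin (k + 1) → ℕ)) → MvPolynomial ℕ ℚ)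
    (hq : ∀ x ∈ Ifin N k, q x ∈ Wspace x.1 2) :
    (∑ x ∈ Ifin N k, q x * monomial (tvec k x.2) 1) ∈ Wspace N (k + 3) := by
  rw [mem_Wspace]
  constructor
  · rw [map_sum, ← Finset.sum_add_distrib]
    refine Finset.sum_eq_zero fun x hx => ?_
    rw [sigmaLin_mul_tvec, ← add_mul, (mem_Wspace.1 (hq x hx)).1, zero_mul]
  · rw [map_sum]
    exact Finset.sum_congr rfl fun x hx => trunc_mul_tvec hx (hq x hx)

lemma Phi_sum {N k : ℕ} (q : ((_ : ℕ) × (Fin (k + 1) → ℕ)) → MvPolynomial ℕ ℚ)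
    (hq : ∀ x ∈ Ifin N k, q x ∈ Wspace x.1 2)
    {x : (_ : ℕ) × (Fin (k + 1) → ℕ)} (hx : x ∈ Ifin N k) :
    Phi x.1 (tvec k x.2) (∑ x' ∈ Ifin N k, q x' * monomial (tvec k x'.2) 1) = q x := by
  rw [Phi_apply]
  have hcoeff : ∀ m : Fin 2 → ℕ, coeff (expvec 2 m + tvec k x.2)
      (∑ x' ∈ Ifin N k, q x' * monomial (tvec k x'.2) 1) = coeff (expvec 2 m) (q x) := by
    intro m
    rw [coeff_sum]
    rw [Finset.sum_congr rfl (fun x' hx' =>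
      coeff_key hx hx' (Wspace_two_supported (hq x' hx')) (expvec_two_support m))]
    rw [Finset.sum_ite_eq' (Ifin N k) x, if_pos hx]
  rw [Finset.sum_congr rfl (fun m (_ : m ∈ Sset x.1 2) => by rw [hcoeff m])]
  rw [← truncMap_apply, (mem_Wspace.1 (hq x hx)).2]
/-! ### Finite dimensionality -/

instance Wspace_fd (N r : ℕ) : FiniteDimensional ℚ (Wspace N r) := by
  have hle : Wspace N r ≤ Submodule.span ℚ
      (((Sset N r).image fun m => monomial (expvec r m) (1 : ℚ)) : Set (MvPolynomial ℕ ℚ)) := by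
    intro p hp
    rw [← (mem_Wspace.1 hp).2, truncMap_apply]
    refine Submodule.sum_mem _ fun m hm => ?_
    have : monomial (expvec r m) (coeff (expvec r m) p)
        = coeff (expvec r m) p • monomial (expvec r m) (1 : ℚ) := by
      rw [MvPolynomial.smul_monomial, smul_eq_mul, mul_one]
    rw [this]
    exact Submodule.smul_mem _ _ (Submodule.subset_span
      (by simp only [Finset.coe_image, Set.mem_image, Finset.mem_coe]; exact ⟨m, hm, rfl⟩))
  exact Submodule.finiteDimensional_of_le hle

/-! ### The main auxiliary theorem -/

theorem Wspace_decomposition_aux (N k : ℕ) :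
    Wspace N (k + 3) ≤ Submodule.span ℚ
        {f : MvPolynomial ℕ ℚ | ∃ n, 1 < n ∧ n < N ∧ ∃ q ∈ Wspace n 2,
          ∃ t ∈ Sset (N - n) (k + 1), f = q * ∏ i : Fin (k + 1), (X ((i : ℕ) + 3)) ^ (t i - 1)} ∧
      Module.finrank ℚ (Wspace N (k + 3)) =
        ∑ n ∈ Finset.Ioo 1 N, Module.finrank ℚ (Wspace n 2) * (Sset (N - n) (k + 1)).card := by
  constructor
  · intro p hp
    rw [decomp (mem_Wspace.1 hp).2]
    refine Submodule.sum_mem _ fun x hx => ?_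
    apply Submodule.subset_span
    obtain ⟨hx1, hx2⟩ := mem_Ifin.1 hx
    rw [Finset.mem_Ioo] at hx1
    exact ⟨x.1, hx1.1, hx1.2, Phi x.1 (tvec k x.2) p, Phi_mem_Wspace hp x hx, x.2, hx2,
      by rw [prod_X_pow_eq]⟩
  · -- the linear maps
    set I := Ifin N k with hI
    let F : Wspace N (k + 3) →ₗ[ℚ] (∀ x : ↥I, ↥(Wspace (x : (_ : ℕ) × (Fin (k + 1) → ℕ)).1 2)) :=
      LinearMap.pi fun x => LinearMap.codRestrict _
        ((Phi (x : (_ : ℕ) × (Fin (k + 1) → ℕ)).1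
          (tvec k (x : (_ : ℕ) × (Fin (k + 1) → ℕ)).2)).comp (Wspace N (k + 3)).subtype)
        (fun p => Phi_mem_Wspace p.2 _ x.2)
    let g : (∀ x : ↥I, ↥(Wspace (x : (_ : ℕ) × (Fin (k + 1) → ℕ)).1 2)) →ₗ[ℚ]
        MvPolynomial ℕ ℚ :=
      ∑ x : ↥I, (LinearMap.mulRight ℚ
          (monomial (tvec k (x : (_ : ℕ) × (Fin (k + 1) → ℕ)).2) (1 : ℚ))).comp
        ((Wspace (x : (_ : ℕ) × (Fin (k + 1) → ℕ)).1 2).subtype.comp (LinearMap.proj x))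
    have hg_apply : ∀ q, g q = ∑ x : ↥I,
        (q x : MvPolynomial ℕ ℚ) * monomial (tvec k (x : (_ : ℕ) × (Fin (k + 1) → ℕ)).2) 1 := by
      intro q
      simp [g, LinearMap.sum_apply, LinearMap.mulRight_apply]
    -- rewrite g q as a sum over the finset, with a membership-insensitive function
    have hg_apply' : ∀ q, g q = ∑ y ∈ I,
        (fun y => if h : y ∈ I then ((q ⟨y, h⟩ : MvPolynomial ℕ ℚ)) else 0) y
          * monomial (tvec k y.2) 1 := by
      intro q
      rw [hg_apply q, ← Finset.sum_coe_sort I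
        (fun y => (if h : y ∈ I then ((q ⟨y, h⟩ : MvPolynomial ℕ ℚ)) else 0)
          * monomial (tvec k y.2) 1)]
      refine Finset.sum_congr rfl fun x _ => ?_
      rw [dif_pos x.2]
    have hgmem : ∀ q, g q ∈ Wspace N (k + 3) := by
      intro q
      rw [hg_apply' q]
      refine sum_mem_Wspace _ fun y hy => ?_
      simp only [dif_pos (show y ∈ I from hy)]
      exact (q ⟨y, hy⟩).2
    let G : (∀ x : ↥I, ↥(Wspace (x : (_ : ℕ) × (Fin (k + 1) → ℕ)).1 2)) →ₗ[ℚ]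
        ↥(Wspace N (k + 3)) := LinearMap.codRestrict _ g hgmem
    have hFG : F.comp G = LinearMap.id := by
      apply LinearMap.ext
      intro q
      funext x
      apply Subtype.ext
      show Phi (x : (_ : ℕ) × (Fin (k + 1) → ℕ)).1
          (tvec k (x : (_ : ℕ) × (Fin (k + 1) → ℕ)).2) (g q) = (q x : MvPolynomial ℕ ℚ)
      rw [hg_apply' q]
      rw [Phi_sum _ (fun y hy => by simp only [dif_pos (show y ∈ I from hy)]; exact (q ⟨y, hy⟩).2) x.2]
      simp only [dif_pos x.2]
    have hGF : G.comp F = LinearMap.id := by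
      apply LinearMap.ext
      intro p
      apply Subtype.ext
      show g (F p) = (p : MvPolynomial ℕ ℚ)
      rw [hg_apply (F p)]
      have : ∀ x : ↥I, ((F p x : MvPolynomial ℕ ℚ))
          = Phi (x : (_ : ℕ) × (Fin (k + 1) → ℕ)).1
            (tvec k (x : (_ : ℕ) × (Fin (k + 1) → ℕ)).2) (p : MvPolynomial ℕ ℚ) := fun x => rfl
      rw [Finset.sum_congr rfl (fun x _ => by rw [this x])]
      rw [Finset.sum_coe_sort I
        (fun y => Phi y.1 (tvec k y.2) (p : MvPolynomial ℕ ℚ) * monomial (tvec k y.2) 1)]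
      exact (decomp (mem_Wspace.1 p.2).2).symm
    let e : ↥(Wspace N (k + 3)) ≃ₗ[ℚ]
        (∀ x : ↥I, ↥(Wspace (x : (_ : ℕ) × (Fin (k + 1) → ℕ)).1 2)) :=
      LinearEquiv.ofLinear F G hFG hGF
    haveI hfree : ∀ x : ↥I, Module.Free ℚ
        ↥(Wspace (x : (_ : ℕ) × (Fin (k + 1) → ℕ)).1 2) :=
      fun x => Module.Free.of_divisionRing ℚ _
    haveI hfin : ∀ x : ↥I, Module.Finite ℚ
        ↥(Wspace (x : (_ : ℕ) × (Fin (k + 1) → ℕ)).1 2) :=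
      fun x => Wspace_fd _ 2
    rw [e.finrank_eq, Module.finrank_pi_fintype]
    rw [Finset.sum_coe_sort I (fun y => Module.finrank ℚ (Wspace y.1 2))]
    rw [hI, Ifin, Finset.sum_sigma]
    refine Finset.sum_congr rfl fun n _ => ?_
    show ∑ _s ∈ Sset (N - n) (k + 1), Module.finrank ℚ (Wspace n 2) = _
    rw [Finset.sum_const, smul_eq_mul, mul_comm]


/-- For `r ≥ 3`, every element of `W_{N,r}` is a `ℚ`-linear combination of polynomials
`p(x1,x2) x3^{n3-1} ⋯ xr^{nr-1}` with `p ∈ W_{n,2}`, `1 < n < N`, `(n3,...,nr) ∈ S_{N-n,r-2}`;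
consequently `dim W_{N,r} = Σ_{1<n<N} dim W_{n,2} · |S_{N-n,r-2}|`. -/
theorem Wspace_decomposition (N r : ℕ) (hr : 3 ≤ r) :
    Wspace N r ≤ Submodule.span ℚ
        {f : MvPolynomial ℕ ℚ | ∃ n, 1 < n ∧ n < N ∧ ∃ q ∈ Wspace n 2,
          ∃ t ∈ Sset (N - n) (r - 2), f = q * ∏ i : Fin (r - 2), (X ((i : ℕ) + 3)) ^ (t i - 1)} ∧
      Module.finrank ℚ (Wspace N r) =
        ∑ n ∈ Finset.Ioo 1 N, Module.finrank ℚ (Wspace n 2) * (Sset (N - n) (r - 2)).card := by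
  obtain ⟨k, rfl⟩ : ∃ k, r = k + 3 := ⟨r - 3, by omega⟩
  exact Wspace_decomposition_aux N k
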